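/- Let T: ℤ × ℤ → ℝ satisfy the time evolution T(n, t+2) = 2T(n, t+1) - T(n, t) + X^{(g)}_{n+1, t} for all n, t, where X^{(g)}_{n,t} is as above and the quasi-periodicity T(n+g+1,t) = T(n,t) + an + bt + c with 2b - a < (g+1)L holds. Then T satisfies the tropical bilinear equation T(n, t-1) + T(n, t+1) = min[2T(n, t), T(n-1, t+1) + T(n+1, t-1) + L] for all n, t. -/

import Mathlib

/-- The tropical permanent-type expression `X^{(k)}_{n,t}`. -/
noncomputable def Xfun (L : ℝ) (T : ℤ → ℤ → ℝ) (k : ℕ) (n t : ℤ) : ℝ :=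
  (Finset.range (k + 1)).inf' Finset.nonempty_range_add_one fun j =>
    (j : ℝ) * L + 2 * T (n - j - 1) (t + 1) + T n t + T (n - 1) t -
      (2 * T (n - 1) (t + 1) + T (n - j) t + T (n - j - 1) t)

lemma inf'_range_two_step (k : ℕ) (f : ℕ → ℝ) :
    (Finset.range (k + 2)).inf' Finset.nonempty_range_add_one f =
      min (f 0) ((Finset.range (k + 1)).inf' Finset.nonempty_range_add_one fun j => f (j + 1)) := by
  apply le_antisymm
  · refine le_min (Finset.inf'_le _ (by simp)) (Finset.le_inf' _ _ fun j hj => ?_)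
    exact Finset.inf'_le _ (by simp at hj ⊢; omega)
  · refine Finset.le_inf' _ _ fun j hj => ?_
    match j with
    | 0 => exact min_le_left _ _
    | j + 1 =>
      refine le_trans (min_le_right _ _) (Finset.inf'_le _ ?_)
      simp at hj ⊢; omega

lemma add_inf'_range (k : ℕ) (c : ℝ) (f : ℕ → ℝ) :
    (Finset.range (k + 1)).inf' Finset.nonempty_range_add_one (fun j => c + f j) =
      c + (Finset.range (k + 1)).inf' Finset.nonempty_range_add_one f := by
  apply le_antisymm
  · obtain ⟨i, hi, hfi⟩ := Finset.exists_mem_eq_inf' Finset.nonempty_range_add_one f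
    rw [hfi]
    exact Finset.inf'_le _ hi
  · exact Finset.le_inf' _ _ fun j hj => add_le_add_right (Finset.inf'_le _ hj) c

lemma key_recursion (g : ℕ) (L a b c : ℝ) (T : ℤ → ℤ → ℝ)
    (hquasi : ∀ n t : ℤ, T (n + g + 1) t = T n t + (a * n + b * t + c))
    (hL : 2 * b - a < (g + 1) * L) (n t : ℤ) :
    Xfun L T g (n + 1) t =
      min 0 ((L + 2 * T (n - 1) (t + 1) + T (n + 1) t - 2 * T n (t + 1) - T (n - 1) t)
        + Xfun L T g n t) := by
  set F : ℕ → ℝ := fun j =>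
    (j : ℝ) * L + 2 * T (n + 1 - j - 1) (t + 1) + T (n + 1) t + T (n + 1 - 1) t -
      (2 * T (n + 1 - 1) (t + 1) + T (n + 1 - j) t + T (n + 1 - j - 1) t) with hF
  have hF0 : F 0 = 0 := by
    simp only [hF]
    push_cast
    ring_nf
  have hFg : F (g + 1) = ((g : ℝ) + 1) * L + a - 2 * b := by
    have h1 := hquasi (n - g) t
    have h2 := hquasi (n - g - 1) t
    have h3 := hquasi (n - g - 1) (t + 1)
    have e1 : n - (g : ℤ) + g + 1 = n + 1 := by ring
    have e2 : n - (g : ℤ) - 1 + g + 1 = n := by ring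
    rw [e1] at h1; rw [e2] at h2; rw [e2] at h3
    simp only [hF]
    push_cast at h1 h2 h3 ⊢
    ring_nf at h1 h2 h3 ⊢
    linarith [h1, h2, h3]
  have hstep : (Finset.range (g + 1 + 1)).inf' Finset.nonempty_range_add_one F =
      (Finset.range (g + 1)).inf' Finset.nonempty_range_add_one F := by
    apply le_antisymm
    · exact Finset.le_inf' _ _ fun j hj => Finset.inf'_le _ (by simp at hj ⊢; omega)
    · refine Finset.le_inf' _ _ fun j hj => ?_
      simp only [Finset.mem_range] at hj
      by_cases hjg : j < g + 1
      · exact Finset.inf'_le _ (Finset.mem_range.mpr hjg)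
      · have hje : j = g + 1 := by omega
        subst hje
        calc (Finset.range (g + 1)).inf' Finset.nonempty_range_add_one F
            ≤ F 0 := Finset.inf'_le _ (by simp)
          _ ≤ F (g + 1) := by
              rw [hF0, hFg]
              push_cast at hL
              linarith
  have hpt : ∀ j : ℕ, F (j + 1) =
      (L + 2 * T (n - 1) (t + 1) + T (n + 1) t - 2 * T n (t + 1) - T (n - 1) t) +
        ((j : ℝ) * L + 2 * T (n - j - 1) (t + 1) + T n t + T (n - 1) t -
          (2 * T (n - 1) (t + 1) + T (n - j) t + T (n - j - 1) t)) := by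
    intro j
    simp only [hF]
    have e3 : n + 1 - ((j : ℤ) + 1) - 1 = n - j - 1 := by ring
    have e4 : n + 1 - ((j : ℤ) + 1) = n - j := by ring
    push_cast
    rw [e3, e4]
    ring_nf
  calc Xfun L T g (n + 1) t
      = (Finset.range (g + 1 + 1)).inf' Finset.nonempty_range_add_one F := hstep.symm
    _ = min (F 0) ((Finset.range (g + 1)).inf' Finset.nonempty_range_add_one fun j => F (j + 1)) :=
        inf'_range_two_step g F
    _ = min 0 ((L + 2 * T (n - 1) (t + 1) + T (n + 1) t - 2 * T n (t + 1) - T (n - 1) t)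
        + Xfun L T g n t) := by
        rw [hF0]
        congr 1
        rw [show ((Finset.range (g + 1)).inf' Finset.nonempty_range_add_one fun j => F (j + 1)) =
            (Finset.range (g + 1)).inf' Finset.nonempty_range_add_one fun j =>
              (L + 2 * T (n - 1) (t + 1) + T (n + 1) t - 2 * T n (t + 1) - T (n - 1) t) +
                ((j : ℝ) * L + 2 * T (n - j - 1) (t + 1) + T n t + T (n - 1) t -
                  (2 * T (n - 1) (t + 1) + T (n - j) t + T (n - j - 1) t)) from
          Finset.inf'_congr Finset.nonempty_range_add_one rfl fun j _ => hpt j]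
        exact add_inf'_range g _ _

theorem evolution_implies_bilinear (g : ℕ) (hg : 0 < g) (L a b c : ℝ)
    (T : ℤ → ℤ → ℝ)
    (hquasi : ∀ n t : ℤ, T (n + g + 1) t = T n t + (a * n + b * t + c))
    (hL : 2 * b - a < (g + 1) * L)
    (hev : ∀ n t : ℤ, T n (t + 2) = 2 * T n (t + 1) - T n t + Xfun L T g (n + 1) t) :
    ∀ n t : ℤ, T n (t - 1) + T n (t + 1) =
      min (2 * T n t) (T (n - 1) (t + 1) + T (n + 1) (t - 1) + L) := by
  intro n t
  obtain ⟨u, rfl⟩ : ∃ u : ℤ, t = u + 1 := ⟨t - 1, by ring⟩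
  have e1 : u + 1 - 1 = u := by ring
  have e2 : u + 1 + 1 = u + 2 := by ring
  rw [e1, e2]
  have hA := hev n u
  have hB := hev (n - 1) u
  rw [show n - 1 + 1 = n from by ring] at hB
  have hkey := key_recursion g L a b c T hquasi hL n u
  rw [hA, hB, hkey]
  rcases le_total (0 : ℝ)
      ((L + 2 * T (n - 1) (u + 1) + T (n + 1) u - 2 * T n (u + 1) - T (n - 1) u)
        + Xfun L T g n u) with h | h
  · rw [min_eq_left h, min_eq_left (by linarith)]
    ring
  · rw [min_eq_right h, min_eq_right (by linarith)]
    ring
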